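/- arXiv:2102.04282 — 9 statements merged into one kernel-verified Lean document; each statement's English description precedes it below -/
import Mathlib

section
/- Let ε ∈ (0,1), k ≥ 1, P ⊂ ℝ^d finite nonempty, π1 : ℝ^d → ℝ^{d'} a map, and X, X* ⊂ ℝ^d with |X| = |X*| = k. Suppose: (i) (1/(1+ε)²)·cost(P,X) ≤ cost(π1(P),π1(X)) ≤ (1+ε)²·cost(P,X), and the same two-sided bounds hold with X* in place of X; (ii) a triple (S',Δ,w), with S' ⊂ ℝ^{d'} finite nonempty, w : S' → ℝ, Δ ∈ ℝ, satisfies (1−ε)·cost(π1(P),Y) ≤ cost((S',Δ,w),Y) ≤ (1+ε)·cost(π1(P),Y) for every finite nonempty Y ⊂ ℝ^{d'} with |Y| ≤ k; (iii) X' := π1(X) satisfies cost((S',Δ,w),X') ≤ cost((S',Δ,w),Y) for every finite nonempty Y ⊂ ℝ^{d'} with |Y| ≤ k. Then cost(P,X) ≤ ((1+ε)^5/(1−ε))·cost(P,X*). (Approximation-error part of Theorem 6 on the DR+CR algorithm, conditioned on the JL and coreset events.) -/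
open scoped BigOperators

abbrev Pt (d : ℕ) : Type := EuclideanSpace ℝ (Fin d)

/-- Per-point k-means cost: `min_{y ∈ Y} ‖p - y‖²`. -/
noncomputable def ptCost {F : Type*} [NormedAddCommGroup F] (p : F) (Y : Set F) : ℝ :=
  sInf ((fun y => ‖p - y‖ ^ 2) '' Y)

/-- Projected k-means cost: `∑_{p ∈ P} min_{y ∈ Y} ‖π(p) - y‖²` (sum indexed by points of `P`). -/
noncomputable def projCost {E F : Type*} [NormedAddCommGroup F]
    (π : E → F) (P : Finset E) (Y : Set F) : ℝ :=
  ∑ p ∈ P, ptCost (π p) Y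

/-- k-means cost: `∑_{p ∈ P} min_{x ∈ X} ‖p - x‖²`. -/
noncomputable def kmeansCost {F : Type*} [NormedAddCommGroup F]
    (P : Finset F) (X : Set F) : ℝ :=
  ∑ p ∈ P, ptCost p X

/-- Coreset cost (possibly after applying a map `π` to the coreset points):
`∑_{q ∈ S} w(q) · min_{y ∈ Y} ‖π(q) - y‖² + Δ`. -/
noncomputable def coresetCost {E F : Type*} [NormedAddCommGroup F]
    (S : Finset E) (Δ : ℝ) (w : E → ℝ) (π : E → F) (Y : Set F) : ℝ :=
  (∑ q ∈ S, w q * ptCost (π q) Y) + Δ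

theorem stmt3 {d d' k : ℕ} (hk : 1 ≤ k) {ε : ℝ} (hε0 : 0 < ε) (hε1 : ε < 1)
    (P : Finset (Pt d)) (hP : P.Nonempty)
    (π1 : Pt d → Pt d')
    (X Xstar : Finset (Pt d)) (hX : X.card = k) (hXstar : Xstar.card = k)
    (hJLX : (1 / (1 + ε) ^ 2) * kmeansCost P (X : Set (Pt d)) ≤
        projCost π1 P (π1 '' (X : Set (Pt d))) ∧
      projCost π1 P (π1 '' (X : Set (Pt d))) ≤
        (1 + ε) ^ 2 * kmeansCost P (X : Set (Pt d)))
    (hJLXstar : (1 / (1 + ε) ^ 2) * kmeansCost P (Xstar : Set (Pt d)) ≤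
        projCost π1 P (π1 '' (Xstar : Set (Pt d))) ∧
      projCost π1 P (π1 '' (Xstar : Set (Pt d))) ≤
        (1 + ε) ^ 2 * kmeansCost P (Xstar : Set (Pt d)))
    (S' : Finset (Pt d')) (hS' : S'.Nonempty) (w : Pt d' → ℝ) (Δ : ℝ)
    (hcore : ∀ Y : Finset (Pt d'), Y.Nonempty → Y.card ≤ k →
      (1 - ε) * projCost π1 P (Y : Set (Pt d')) ≤ coresetCost S' Δ w id (Y : Set (Pt d')) ∧
      coresetCost S' Δ w id (Y : Set (Pt d')) ≤ (1 + ε) * projCost π1 P (Y : Set (Pt d')))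
    (hopt : ∀ Y : Finset (Pt d'), Y.Nonempty → Y.card ≤ k →
      coresetCost S' Δ w id (π1 '' (X : Set (Pt d))) ≤
        coresetCost S' Δ w id (Y : Set (Pt d'))) :
    kmeansCost P (X : Set (Pt d)) ≤
      ((1 + ε) ^ 5 / (1 - ε)) * kmeansCost P (Xstar : Set (Pt d)) := by
  have hXne : X.Nonempty := Finset.card_pos.mp (by omega)
  have hXsne : Xstar.Nonempty := Finset.card_pos.mp (by omega)
  classical
  have hXFne : (X.image π1).Nonempty := hXne.image _
  have hXsFne : (Xstar.image π1).Nonempty := hXsne.image _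
  have hXFc : (X.image π1).card ≤ k := hX ▸ Finset.card_image_le
  have hXsFc : (Xstar.image π1).card ≤ k := hXstar ▸ Finset.card_image_le
  have hcoe : ((X.image π1 : Finset (Pt d')) : Set (Pt d')) = π1 '' (X : Set (Pt d)) :=
    Finset.coe_image
  have hcoes : ((Xstar.image π1 : Finset (Pt d')) : Set (Pt d')) = π1 '' (Xstar : Set (Pt d)) :=
    Finset.coe_image
  have hA := (hcore (X.image π1) hXFne hXFc).1
  have hB := hopt (Xstar.image π1) hXsFne hXsFc
  have hC := (hcore (Xstar.image π1) hXsFne hXsFc).2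
  rw [hcoe] at hA
  rw [hcoes] at hB hC
  have h1 := hJLX.1
  have h2 := hJLXstar.2
  have hp1 : (0:ℝ) < 1 + ε := by linarith
  have hm1 : (0:ℝ) < 1 - ε := by linarith
  have hp2 : (0:ℝ) < (1 + ε) ^ 2 := pow_pos hp1 2
  rw [one_div, inv_mul_le_iff₀ hp2] at h1
  rw [div_mul_eq_mul_div, le_div_iff₀ hm1]
  calc kmeansCost P (X : Set (Pt d)) * (1 - ε)
      ≤ ((1 + ε) ^ 2 * projCost π1 P (π1 '' (X : Set (Pt d)))) * (1 - ε) :=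
        mul_le_mul_of_nonneg_right h1 hm1.le
    _ = (1 + ε) ^ 2 * ((1 - ε) * projCost π1 P (π1 '' (X : Set (Pt d)))) := by ring
    _ ≤ (1 + ε) ^ 2 * coresetCost S' Δ w id (π1 '' (X : Set (Pt d))) :=
        mul_le_mul_of_nonneg_left hA hp2.le
    _ ≤ (1 + ε) ^ 2 * coresetCost S' Δ w id (π1 '' (Xstar : Set (Pt d))) :=
        mul_le_mul_of_nonneg_left hB hp2.le
    _ ≤ (1 + ε) ^ 2 * ((1 + ε) * projCost π1 P (π1 '' (Xstar : Set (Pt d)))) :=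
        mul_le_mul_of_nonneg_left hC hp2.le
    _ = (1 + ε) ^ 3 * projCost π1 P (π1 '' (Xstar : Set (Pt d))) := by ring
    _ ≤ (1 + ε) ^ 3 * ((1 + ε) ^ 2 * kmeansCost P (Xstar : Set (Pt d))) :=
        mul_le_mul_of_nonneg_left h2 (pow_pos hp1 3).le
    _ = (1 + ε) ^ 5 * kmeansCost P (Xstar : Set (Pt d)) := by ring
end

section
/- Let ε ∈ (0,1), k ≥ 1, P ⊂ ℝ^d finite nonempty, and X, X* ⊂ ℝ^d with |X| = |X*| = k. Suppose: (i) a triple (S,Δ,w), with S ⊂ ℝ^d finite nonempty, w : S → ℝ, Δ ∈ ℝ, satisfies (1−ε)·cost(P,Y) ≤ cost((S,Δ,w),Y) ≤ (1+ε)·cost(P,Y) for every Y ⊂ ℝ^d with |Y| = k; (ii) a map π1 : ℝ^d → ℝ^{d'} satisfies (1/(1+ε)²)·cost((S,Δ,w),X) ≤ cost((π1(S),Δ,w),π1(X)) ≤ (1+ε)²·cost((S,Δ,w),X), and the same two-sided bounds hold with X* in place of X; (iii) X' := π1(X) satisfies cost((π1(S),Δ,w),X') ≤ cost((π1(S),Δ,w),Y)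 for every finite nonempty Y ⊂ ℝ^{d'} with |Y| ≤ k. Then cost(P,X) ≤ ((1+ε)^5/(1−ε))·cost(P,X*). (Approximation-error part of Theorem 8 on the CR+DR algorithm, conditioned on the coreset and JL events.) -/
open scoped BigOperators

theorem stmt4 {d d' k : ℕ} (hk : 1 ≤ k) {ε : ℝ} (hε0 : 0 < ε) (hε1 : ε < 1)
    (P : Finset (Pt d)) (hP : P.Nonempty)
    (X Xstar : Finset (Pt d)) (hX : X.card = k) (hXstar : Xstar.card = k)
    (S : Finset (Pt d)) (hS : S.Nonempty) (w : Pt d → ℝ) (Δ : ℝ)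
    (hcore : ∀ Y : Finset (Pt d), Y.card = k →
      (1 - ε) * kmeansCost P (Y : Set (Pt d)) ≤ coresetCost S Δ w id (Y : Set (Pt d)) ∧
      coresetCost S Δ w id (Y : Set (Pt d)) ≤ (1 + ε) * kmeansCost P (Y : Set (Pt d)))
    (π1 : Pt d → Pt d')
    (hJLX : (1 / (1 + ε) ^ 2) * coresetCost S Δ w id (X : Set (Pt d)) ≤
        coresetCost S Δ w π1 (π1 '' (X : Set (Pt d))) ∧
      coresetCost S Δ w π1 (π1 '' (X : Set (Pt d))) ≤
        (1 + ε) ^ 2 * coresetCost S Δ w id (X : Set (Pt d)))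
    (hJLXstar : (1 / (1 + ε) ^ 2) * coresetCost S Δ w id (Xstar : Set (Pt d)) ≤
        coresetCost S Δ w π1 (π1 '' (Xstar : Set (Pt d))) ∧
      coresetCost S Δ w π1 (π1 '' (Xstar : Set (Pt d))) ≤
        (1 + ε) ^ 2 * coresetCost S Δ w id (Xstar : Set (Pt d)))
    (hopt : ∀ Y : Finset (Pt d'), Y.Nonempty → Y.card ≤ k →
      coresetCost S Δ w π1 (π1 '' (X : Set (Pt d))) ≤
        coresetCost S Δ w π1 (Y : Set (Pt d'))) :
    kmeansCost P (X : Set (Pt d)) ≤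
      ((1 + ε) ^ 5 / (1 - ε)) * kmeansCost P (Xstar : Set (Pt d)) := by
  have h1 : (0:ℝ) < 1 + ε := by linarith
  have h2 : (0:ℝ) < 1 - ε := by linarith
  have hp2 : (0:ℝ) < (1 + ε) ^ 2 := pow_pos h1 2
  have hXsne : Xstar.Nonempty := Finset.card_pos.mp (by omega)
  set KX := kmeansCost P (X : Set (Pt d)) with hKX
  set KXs := kmeansCost P (Xstar : Set (Pt d)) with hKXs
  set CX := coresetCost S Δ w id (X : Set (Pt d)) with hCX
  set CXs := coresetCost S Δ w id (Xstar : Set (Pt d)) with hCXs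
  set PrX := coresetCost S Δ w π1 (π1 '' (X : Set (Pt d))) with hPrX
  set PrXs := coresetCost S Δ w π1 (π1 '' (Xstar : Set (Pt d))) with hPrXs
  have a1 : (1 - ε) * KX ≤ CX := (hcore X hX).1
  have a2 : CX ≤ (1 + ε) ^ 2 * PrX := by
    have h := hJLX.1
    rw [one_div, inv_mul_le_iff₀ hp2] at h
    exact h
  classical
  have a3 : PrX ≤ PrXs := by
    have h := hopt (Xstar.image π1) (hXsne.image π1)
      (le_trans (Finset.card_image_le) (le_of_eq hXstar))
    rwa [Finset.coe_image] at h
  have a4 : PrXs ≤ (1 + ε) ^ 2 * CXs := hJLXstar.2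
  have a5 : CXs ≤ (1 + ε) * KXs := (hcore Xstar hXstar).2
  have b2 : (1 + ε) ^ 2 * PrXs ≤ (1 + ε) ^ 2 * ((1 + ε) ^ 2 * CXs) := by gcongr
  have b3 : (1 + ε) ^ 2 * ((1 + ε) ^ 2 * CXs) ≤ (1 + ε) ^ 2 * ((1 + ε) ^ 2 * ((1 + ε) * KXs)) := by
    gcongr
  have key : (1 - ε) * KX ≤ (1 + ε) ^ 5 * KXs := by nlinarith
  rw [div_mul_eq_mul_div, le_div_iff₀ h2]
  linarith [key]
end

section
/- Let ε ∈ (0,1), k ≥ 1, P ⊂ ℝ^d finite nonempty, and X, X* ⊂ ℝ^d with |X| = |X*| = k. Let π1 : ℝ^d → ℝ^{d1} and π3 : ℝ^{d1} → ℝ^{d2} be maps and let (S,Δ,w) be a triple with S ⊂ ℝ^{d1} finite nonempty, w : S → ℝ, Δ ∈ ℝ. Suppose: (i) (1/(1+ε)²)·cost(P,X) ≤ cost(π1(P),π1(X)) ≤ (1+ε)²·cost(P,X), and likewise with X* in place of X; (ii) (1−ε)·cost(π1(P),Y) ≤ cost((S,Δ,w),Y) ≤ (1+ε)·cost(π1(P),Y)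 for every finite nonempty Y ⊂ ℝ^{d1} with |Y| ≤ k; (iii) (1/(1+ε)²)·cost((S,Δ,w),π1(X)) ≤ cost((π3(S),Δ,w),π3(π1(X))) ≤ (1+ε)²·cost((S,Δ,w),π1(X)), and likewise with X* in place of X; (iv) X' := π3(π1(X)) satisfies cost((π3(S),Δ,w),X') ≤ cost((π3(S),Δ,w),Y) for every finite nonempty Y ⊂ ℝ^{d2} with |Y| ≤ k. Then cost(P,X) ≤ ((1+ε)^9/(1−ε))·cost(P,X*). (Approximation-error part of Theorem 9 on the DR+CR+DR algorithm JL+FSS+JL, conditioned on the JL and coreset events.) -/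
open scoped BigOperators

theorem stmt5 {d d1 d2 k : ℕ} (hk : 1 ≤ k) {ε : ℝ} (hε0 : 0 < ε) (hε1 : ε < 1)
    (P : Finset (Pt d)) (hP : P.Nonempty)
    (X Xstar : Finset (Pt d)) (hX : X.card = k) (hXstar : Xstar.card = k)
    (π1 : Pt d → Pt d1) (π3 : Pt d1 → Pt d2)
    (S : Finset (Pt d1)) (hS : S.Nonempty) (w : Pt d1 → ℝ) (Δ : ℝ)
    (hJL1X : (1 / (1 + ε) ^ 2) * kmeansCost P (X : Set (Pt d)) ≤
        projCost π1 P (π1 '' (X : Set (Pt d))) ∧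
      projCost π1 P (π1 '' (X : Set (Pt d))) ≤
        (1 + ε) ^ 2 * kmeansCost P (X : Set (Pt d)))
    (hJL1Xstar : (1 / (1 + ε) ^ 2) * kmeansCost P (Xstar : Set (Pt d)) ≤
        projCost π1 P (π1 '' (Xstar : Set (Pt d))) ∧
      projCost π1 P (π1 '' (Xstar : Set (Pt d))) ≤
        (1 + ε) ^ 2 * kmeansCost P (Xstar : Set (Pt d)))
    (hcore : ∀ Y : Finset (Pt d1), Y.Nonempty → Y.card ≤ k →
      (1 - ε) * projCost π1 P (Y : Set (Pt d1)) ≤ coresetCost S Δ w id (Y : Set (Pt d1)) ∧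
      coresetCost S Δ w id (Y : Set (Pt d1)) ≤ (1 + ε) * projCost π1 P (Y : Set (Pt d1)))
    (hJL2X : (1 / (1 + ε) ^ 2) * coresetCost S Δ w id (π1 '' (X : Set (Pt d))) ≤
        coresetCost S Δ w π3 (π3 '' (π1 '' (X : Set (Pt d)))) ∧
      coresetCost S Δ w π3 (π3 '' (π1 '' (X : Set (Pt d)))) ≤
        (1 + ε) ^ 2 * coresetCost S Δ w id (π1 '' (X : Set (Pt d))))
    (hJL2Xstar : (1 / (1 + ε) ^ 2) * coresetCost S Δ w id (π1 '' (Xstar : Set (Pt d))) ≤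
        coresetCost S Δ w π3 (π3 '' (π1 '' (Xstar : Set (Pt d)))) ∧
      coresetCost S Δ w π3 (π3 '' (π1 '' (Xstar : Set (Pt d)))) ≤
        (1 + ε) ^ 2 * coresetCost S Δ w id (π1 '' (Xstar : Set (Pt d))))
    (hopt : ∀ Y : Finset (Pt d2), Y.Nonempty → Y.card ≤ k →
      coresetCost S Δ w π3 (π3 '' (π1 '' (X : Set (Pt d)))) ≤
        coresetCost S Δ w π3 (Y : Set (Pt d2))) :
    kmeansCost P (X : Set (Pt d)) ≤
      ((1 + ε) ^ 9 / (1 - ε)) * kmeansCost P (Xstar : Set (Pt d)) := by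
  classical
  have hXne : X.Nonempty := Finset.card_pos.mp (by rw [hX]; exact hk)
  have hXsne : Xstar.Nonempty := Finset.card_pos.mp (by rw [hXstar]; exact hk)
  have h1 : (0:ℝ) < 1 + ε := by linarith
  have h2 : (0:ℝ) < 1 - ε := by linarith
  set A := kmeansCost P (X : Set (Pt d)) with hA
  set As := kmeansCost P (Xstar : Set (Pt d)) with hAs
  set B := projCost π1 P (π1 '' (X : Set (Pt d))) with hB
  set Bs := projCost π1 P (π1 '' (Xstar : Set (Pt d))) with hBs
  set C := coresetCost S Δ w id (π1 '' (X : Set (Pt d))) with hC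
  set Cs := coresetCost S Δ w id (π1 '' (Xstar : Set (Pt d))) with hCs
  set D := coresetCost S Δ w π3 (π3 '' (π1 '' (X : Set (Pt d)))) with hD
  set Ds := coresetCost S Δ w π3 (π3 '' (π1 '' (Xstar : Set (Pt d)))) with hDs
  have hAB : A ≤ (1 + ε) ^ 2 * B := by
    have h := hJL1X.1
    rw [one_div, inv_mul_le_iff₀ (pow_pos h1 2)] at h
    exact h
  have hBC : (1 - ε) * B ≤ C := by
    have h := (hcore (X.image π1) (hXne.image π1)
      (le_trans Finset.card_image_le hX.le)).1
    rwa [Finset.coe_image] at h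
  have hCD : C ≤ (1 + ε) ^ 2 * D := by
    have h := hJL2X.1
    rw [one_div, inv_mul_le_iff₀ (pow_pos h1 2)] at h
    exact h
  have hDDs : D ≤ Ds := by
    have h := hopt ((Xstar.image π1).image π3) ((hXsne.image π1).image π3)
      (le_trans Finset.card_image_le (le_trans Finset.card_image_le hXstar.le))
    rwa [Finset.coe_image, Finset.coe_image] at h
  have hDsCs : Ds ≤ (1 + ε) ^ 2 * Cs := hJL2Xstar.2
  have hCsBs : Cs ≤ (1 + ε) * Bs := by
    have h := (hcore (Xstar.image π1) (hXsne.image π1)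
      (le_trans Finset.card_image_le hXstar.le)).2
    rwa [Finset.coe_image] at h
  have hBsAs : Bs ≤ (1 + ε) ^ 2 * As := hJL1Xstar.2
  have key : (1 - ε) * A ≤ (1 + ε) ^ 9 * As := by
    calc (1 - ε) * A ≤ (1 - ε) * ((1 + ε) ^ 2 * B) :=
          mul_le_mul_of_nonneg_left hAB h2.le
      _ = (1 + ε) ^ 2 * ((1 - ε) * B) := by ring
      _ ≤ (1 + ε) ^ 2 * C := mul_le_mul_of_nonneg_left hBC (by positivity)
      _ ≤ (1 + ε) ^ 2 * ((1 + ε) ^ 2 * D) := mul_le_mul_of_nonneg_left hCD (by positivity)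
      _ = (1 + ε) ^ 4 * D := by ring
      _ ≤ (1 + ε) ^ 4 * Ds := mul_le_mul_of_nonneg_left hDDs (by positivity)
      _ ≤ (1 + ε) ^ 4 * ((1 + ε) ^ 2 * Cs) := mul_le_mul_of_nonneg_left hDsCs (by positivity)
      _ = (1 + ε) ^ 6 * Cs := by ring
      _ ≤ (1 + ε) ^ 6 * ((1 + ε) * Bs) := mul_le_mul_of_nonneg_left hCsBs (by positivity)
      _ = (1 + ε) ^ 7 * Bs := by ring
      _ ≤ (1 + ε) ^ 7 * ((1 + ε) ^ 2 * As) := mul_le_mul_of_nonneg_left hBsAs (by positivity)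
      _ = (1 + ε) ^ 9 * As := by ring
  rw [div_mul_eq_mul_div, le_div_iff₀ h2, mul_comm]
  exact key
end

section
/- Let ε ∈ (0,1), k ≥ 1, P ⊂ ℝ^d finite nonempty, τ : ℝ^d → ℝ^d a map, and Δ ≥ 0 such that (1−ε)·cost(P,X) ≤ cost(τ(P),X) + Δ ≤ (1+ε)·cost(P,X) for every X ⊂ ℝ^d with |X| = k. Suppose a triple (S,0,w), with S ⊂ ℝ^d finite nonempty and w : S → ℝ, satisfies (1−ε)·cost(τ(P),X) ≤ cost((S,0,w),X) ≤ (1+ε)·cost(τ(P),X) for every X ⊂ ℝ^d with |X| = k, and suppose X ⊂ ℝ^d with |X| = k satisfies cost((S,0,w),X) ≤ cost((S,0,w),Y) for every Y ⊂ ℝ^d with |Y| = k. Then for every X* ⊂ ℝ^d with |X*| = k, cost(P,X) ≤ ((1+ε)²/(1−ε)²)·cost(P,X*). (Approximation-error part of the Theorem on BKLW, conditioned on the disPCA and disSS guarantees.) -/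
open scoped BigOperators

theorem stmt6 {d k : ℕ} (hk : 1 ≤ k) {ε : ℝ} (hε0 : 0 < ε) (hε1 : ε < 1)
    (P : Finset (Pt d)) (hP : P.Nonempty)
    (τ : Pt d → Pt d) (Δ : ℝ) (hΔ : 0 ≤ Δ)
    (hpca : ∀ X : Finset (Pt d), X.card = k →
      (1 - ε) * kmeansCost P (X : Set (Pt d)) ≤ projCost τ P (X : Set (Pt d)) + Δ ∧
      projCost τ P (X : Set (Pt d)) + Δ ≤ (1 + ε) * kmeansCost P (X : Set (Pt d)))
    (S : Finset (Pt d)) (hS : S.Nonempty) (w : Pt d → ℝ)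
    (hcore : ∀ X : Finset (Pt d), X.card = k →
      (1 - ε) * projCost τ P (X : Set (Pt d)) ≤ coresetCost S 0 w id (X : Set (Pt d)) ∧
      coresetCost S 0 w id (X : Set (Pt d)) ≤ (1 + ε) * projCost τ P (X : Set (Pt d)))
    (X : Finset (Pt d)) (hX : X.card = k)
    (hopt : ∀ Y : Finset (Pt d), Y.card = k →
      coresetCost S 0 w id (X : Set (Pt d)) ≤ coresetCost S 0 w id (Y : Set (Pt d))) :
    ∀ Xstar : Finset (Pt d), Xstar.card = k →
      kmeansCost P (X : Set (Pt d)) ≤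
        ((1 + ε) ^ 2 / (1 - ε) ^ 2) * kmeansCost P (Xstar : Set (Pt d)) := by
  intro Xstar hXs
  have h1 := (hpca X hX).1
  have h2 := (hcore X hX).1
  have h3 := hopt Xstar hXs
  have h4 := (hcore Xstar hXs).2
  have h5 := (hpca Xstar hXs).2
  have hpos : (0:ℝ) < (1 - ε) ^ 2 := by nlinarith
  rw [div_mul_eq_mul_div, le_div_iff₀ hpos]
  nlinarith [mul_le_mul_of_nonneg_left h1 (le_of_lt (by linarith : (0:ℝ) < 1 - ε))]
end

section
/- Let ε ∈ (0,1), k ≥ 1, P ⊂ ℝ^d finite nonempty, π1 : ℝ^d → ℝ^{d'} a map, and X, X* ⊂ ℝ^d with |X| = |X*| = k. Suppose: (i) (1/(1+ε)²)·cost(P,X) ≤ cost(π1(P),π1(X)) ≤ (1+ε)²·cost(P,X), and likewise with X* in place of X; (ii) there are S' ⊂ ℝ^{d'} finite nonempty, w : S' → ℝ, and Δ ≥ 0 such that (1−ε)²·cost(π1(P),Y) ≤ cost((S',0,w),Y) + Δ ≤ (1+ε)²·cost(π1(P),Y) for every finite nonempty Y ⊂ ℝ^{d'} with |Y| ≤ k;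 (iii) X' := π1(X) satisfies cost((S',0,w),X') ≤ cost((S',0,w),Y) for every finite nonempty Y ⊂ ℝ^{d'} with |Y| ≤ k. Then cost(P,X) ≤ ((1+ε)^6/(1−ε)²)·cost(P,X*). (Approximation-error part of Theorem 11 on the distributed JL+BKLW algorithm, conditioned on the JL and BKLW events.) -/
open scoped BigOperators

theorem stmt8 {d d' k : ℕ} (hk : 1 ≤ k) {ε : ℝ} (hε0 : 0 < ε) (hε1 : ε < 1)
    (P : Finset (Pt d)) (hP : P.Nonempty)
    (π1 : Pt d → Pt d')
    (X Xstar : Finset (Pt d)) (hX : X.card = k) (hXstar : Xstar.card = k)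
    (hJLX : (1 / (1 + ε) ^ 2) * kmeansCost P (X : Set (Pt d)) ≤
        projCost π1 P (π1 '' (X : Set (Pt d))) ∧
      projCost π1 P (π1 '' (X : Set (Pt d))) ≤
        (1 + ε) ^ 2 * kmeansCost P (X : Set (Pt d)))
    (hJLXstar : (1 / (1 + ε) ^ 2) * kmeansCost P (Xstar : Set (Pt d)) ≤
        projCost π1 P (π1 '' (Xstar : Set (Pt d))) ∧
      projCost π1 P (π1 '' (Xstar : Set (Pt d))) ≤
        (1 + ε) ^ 2 * kmeansCost P (Xstar : Set (Pt d)))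
    (S' : Finset (Pt d')) (hS' : S'.Nonempty) (w : Pt d' → ℝ) (Δ : ℝ) (hΔ : 0 ≤ Δ)
    (hBKLW : ∀ Y : Finset (Pt d'), Y.Nonempty → Y.card ≤ k →
      (1 - ε) ^ 2 * projCost π1 P (Y : Set (Pt d')) ≤
          coresetCost S' 0 w id (Y : Set (Pt d')) + Δ ∧
      coresetCost S' 0 w id (Y : Set (Pt d')) + Δ ≤
          (1 + ε) ^ 2 * projCost π1 P (Y : Set (Pt d')))
    (hopt : ∀ Y : Finset (Pt d'), Y.Nonempty → Y.card ≤ k →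
      coresetCost S' 0 w id (π1 '' (X : Set (Pt d))) ≤
        coresetCost S' 0 w id (Y : Set (Pt d'))) :
    kmeansCost P (X : Set (Pt d)) ≤
      ((1 + ε) ^ 6 / (1 - ε) ^ 2) * kmeansCost P (Xstar : Set (Pt d)) := by
  classical
  have ht : (0:ℝ) < (1 + ε) ^ 2 := by positivity
  have hs : (0:ℝ) < (1 - ε) ^ 2 := pow_pos (by linarith) 2
  have hXne : X.Nonempty := Finset.card_pos.mp (by omega)
  have hXsne : Xstar.Nonempty := Finset.card_pos.mp (by omega)
  set Y1 := X.image π1 with hY1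
  set Y2 := Xstar.image π1 with hY2
  have hY1ne : Y1.Nonempty := hXne.image _
  have hY2ne : Y2.Nonempty := hXsne.image _
  have hY1c : Y1.card ≤ k := hX ▸ Finset.card_image_le
  have hY2c : Y2.card ≤ k := hXstar ▸ Finset.card_image_le
  have hcoe1 : (Y1 : Set (Pt d')) = π1 '' (X : Set (Pt d)) := Finset.coe_image
  have hcoe2 : (Y2 : Set (Pt d')) = π1 '' (Xstar : Set (Pt d)) := Finset.coe_image
  have hc1 := hBKLW Y1 hY1ne hY1c
  have hc2 := hBKLW Y2 hY2ne hY2c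
  have hop := hopt Y2 hY2ne hY2c
  rw [hcoe1] at hc1
  rw [hcoe2] at hc2 hop
  set A := kmeansCost P (X : Set (Pt d))
  set B := kmeansCost P (Xstar : Set (Pt d))
  set p1 := projCost π1 P (π1 '' (X : Set (Pt d)))
  set p2 := projCost π1 P (π1 '' (Xstar : Set (Pt d)))
  set c1 := coresetCost S' 0 w id (π1 '' (X : Set (Pt d)))
  set c2 := coresetCost S' 0 w id (π1 '' (Xstar : Set (Pt d)))
  have hA : A ≤ (1 + ε) ^ 2 * p1 := by
    have h1 := hJLX.1
    rw [div_mul_eq_mul_div, div_le_iff₀ ht] at h1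
    linarith
  have hB : p2 ≤ (1 + ε) ^ 2 * B := hJLXstar.2
  rw [div_mul_eq_mul_div, le_div_iff₀ hs]
  nlinarith [hc1.1, hc2.2, hop, mul_le_mul_of_nonneg_left hA hs.le,
    mul_le_mul_of_nonneg_left hc1.1 ht.le, mul_le_mul_of_nonneg_left hop ht.le,
    mul_le_mul_of_nonneg_left hc2.2 ht.le,
    mul_le_mul_of_nonneg_left hB (by positivity : (0:ℝ) ≤ (1+ε)^4)]
end

section
/- Let S ⊂ ℝ^d be finite, w : S → [0,∞), Δ ∈ ℝ, and let X ⊂ ℝ^d be finite nonempty. Let Γ : S → ℝ^d and Δ_QT, Δ_D ≥ 0 be such that ‖q − Γ(q)‖ ≤ Δ_QT for every q ∈ S, and ‖q−x‖ ≤ Δ_D and ‖Γ(q)−x‖ ≤ Δ_D for every q ∈ S and every x ∈ X. Then |cost((S,Δ,w),X) − cost((Γ(S),Δ,w),X)| ≤ 2·Δ_D·Δ_QT·Σ_{q∈S} w(q), where cost((Γ(S),Δ,w),X) := Σ_{q∈S} w(q)·min_{x∈X} ‖Γ(q)−x‖² + Δ. (Quantized-coreset cost-difference bound, equation (30) in the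 proof of Theorem 13.) -/
open scoped BigOperators

lemma ptCost_eq_inf' {d : ℕ} (p : Pt d) (X : Finset (Pt d)) (hX : X.Nonempty) :
    ptCost p (X : Set (Pt d)) = X.inf' hX (fun y => ‖p - y‖ ^ 2) := by
  rw [ptCost, Finset.inf'_eq_csInf_image]

lemma ptCost_diff {d : ℕ} (p q : Pt d) (X : Finset (Pt d)) (hX : X.Nonempty) (c : ℝ)
    (h : ∀ x ∈ X, |‖p - x‖ ^ 2 - ‖q - x‖ ^ 2| ≤ c) :
    |ptCost p (X : Set (Pt d)) - ptCost q (X : Set (Pt d))| ≤ c := by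
  rw [ptCost_eq_inf' p X hX, ptCost_eq_inf' q X hX]
  rw [abs_sub_le_iff]
  constructor
  · obtain ⟨x, hx, hxe⟩ := X.exists_mem_eq_inf' hX (fun y => ‖q - y‖ ^ 2)
    have h1 : X.inf' hX (fun y => ‖p - y‖ ^ 2) ≤ ‖p - x‖ ^ 2 := Finset.inf'_le _ hx
    have := (abs_le.mp (h x hx)).2
    linarith [hxe ▸ this]
  · obtain ⟨x, hx, hxe⟩ := X.exists_mem_eq_inf' hX (fun y => ‖p - y‖ ^ 2)
    have h1 : X.inf' hX (fun y => ‖q - y‖ ^ 2) ≤ ‖q - x‖ ^ 2 := Finset.inf'_le _ hx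
    have := (abs_le.mp (h x hx)).1
    linarith [hxe ▸ this]

theorem stmt10 {d : ℕ} (S : Finset (Pt d)) (w : Pt d → ℝ) (hw : ∀ q ∈ S, 0 ≤ w q)
    (Δ : ℝ) (X : Finset (Pt d)) (hX : X.Nonempty)
    (Γ : Pt d → Pt d) (ΔQT ΔD : ℝ) (hΔQT : 0 ≤ ΔQT) (hΔD : 0 ≤ ΔD)
    (hΓ : ∀ q ∈ S, ‖q - Γ q‖ ≤ ΔQT)
    (hbound : ∀ q ∈ S, ∀ x ∈ X, ‖q - x‖ ≤ ΔD ∧ ‖Γ q - x‖ ≤ ΔD) :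
    |coresetCost S Δ w id (X : Set (Pt d)) - coresetCost S Δ w Γ (X : Set (Pt d))| ≤
      2 * ΔD * ΔQT * ∑ q ∈ S, w q := by
  have key : ∀ q ∈ S, |ptCost q (X : Set (Pt d)) - ptCost (Γ q) (X : Set (Pt d))| ≤
      2 * ΔD * ΔQT := by
    intro q hq
    apply ptCost_diff q (Γ q) X hX
    intro x hx
    obtain ⟨h1, h2⟩ := hbound q hq x hx
    have hqΓ := hΓ q hq
    have hfac : ‖q - x‖ ^ 2 - ‖Γ q - x‖ ^ 2 =
        (‖q - x‖ - ‖Γ q - x‖) * (‖q - x‖ + ‖Γ q - x‖) := by ring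
    rw [hfac, abs_mul]
    have hd : |‖q - x‖ - ‖Γ q - x‖| ≤ ΔQT := by
      have := abs_norm_sub_norm_le (q - x) (Γ q - x)
      have he : q - x - (Γ q - x) = q - Γ q := by abel
      rw [he] at this
      linarith
    have hs : |‖q - x‖ + ‖Γ q - x‖| ≤ 2 * ΔD := by
      rw [abs_of_nonneg (by positivity)]; linarith
    calc |‖q - x‖ - ‖Γ q - x‖| * |‖q - x‖ + ‖Γ q - x‖| ≤ ΔQT * (2 * ΔD) := by
          apply mul_le_mul hd hs (abs_nonneg _) hΔQT
      _ = 2 * ΔD * ΔQT := by ring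
  simp only [coresetCost, add_sub_add_right_eq_sub, ← Finset.sum_sub_distrib, ← mul_sub]
  calc |∑ q ∈ S, w q * (ptCost (id q) (X : Set (Pt d)) - ptCost (Γ q) (X : Set (Pt d)))|
      ≤ ∑ q ∈ S, |w q * (ptCost (id q) (X : Set (Pt d)) - ptCost (Γ q) (X : Set (Pt d)))| :=
        Finset.abs_sum_le_sum_abs _ _
    _ ≤ ∑ q ∈ S, w q * (2 * ΔD * ΔQT) := by
        apply Finset.sum_le_sum
        intro q hq
        rw [abs_mul, abs_of_nonneg (hw q hq)]
        exact mul_le_mul_of_nonneg_left (key q hq) (hw q hq)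
    _ = 2 * ΔD * ΔQT * ∑ q ∈ S, w q := by rw [← Finset.sum_mul]; ring
end

section
/- Let ε1, ε2 ∈ (0,1), k ≥ 1, Δ_D, Δ_QT ≥ 0, let P ⊂ ℝ^d be finite nonempty with |P| = n, let X, X* ⊂ ℝ^d with |X| = |X*| = k, and let π1 : ℝ^d → ℝ^{d'} be a map. Suppose: (i) (1/(1+ε1)²)·cost(P,X) ≤ cost(π1(P),π1(X)) ≤ (1+ε1)²·cost(P,X), and likewise with X* in place of X; (ii) a triple (S',Δ,w), with S' ⊂ ℝ^{d'} finite nonempty, w : S' → [0,∞) with Σ_{q∈S'} w(q) = n, and Δ ∈ ℝ, satisfies (1−ε2)·cost(π1(P),Y) ≤ cost((S',Δ,w),Y) ≤ (1+ε2)·cost(π1(P),Y) for every finite nonempty Y ⊂ ℝ^{d'} with |Y| ≤ k; (iii) Γ : S' → ℝ^{d'} satisfies ‖q − Γ(q)‖ ≤ Δ_QT for every q ∈ S', and ‖q−y‖ ≤ Δ_D and ‖Γ(q)−y‖ ≤ Δ_D for every q ∈ S' and every y ∈ π1(X) ∪ π1(X*); (iv) X' := π1(X) satisfies cost((Γ(S'),Δ,w),X')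 ≤ cost((Γ(S'),Δ,w),Y) for every finite nonempty Y ⊂ ℝ^{d'} with |Y| ≤ k. Then cost(P,X) ≤ ((1+ε1)^4·(1+ε2)/(1−ε2))·cost(P,X*) + ((1+ε1)²/(1−ε2))·4·n·Δ_D·Δ_QT. (Theorem 13, part 1: the quantization-added DR+CR algorithm, conditioned on the JL and coreset events.) -/
open scoped BigOperators

lemma ptCost_bddBelow {F : Type*} [NormedAddCommGroup F] (p : F) (Y : Set F) :
    BddBelow ((fun y => ‖p - y‖ ^ 2) '' Y) :=
  ⟨0, by rintro b ⟨y, -, rfl⟩; positivity⟩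

lemma ptCost_le_of_mem {F : Type*} [NormedAddCommGroup F] (p : F) {Y : Set F} {y : F}
    (hy : y ∈ Y) : ptCost p Y ≤ ‖p - y‖ ^ 2 :=
  csInf_le (ptCost_bddBelow p Y) ⟨y, hy, rfl⟩

lemma ptCost_shift {F : Type*} [NormedAddCommGroup F] {q q' : F} {Y : Set F}
    (hY : Y.Nonempty) {ΔD ΔQT : ℝ} (hΔD : 0 ≤ ΔD)
    (hqq' : ‖q - q'‖ ≤ ΔQT)
    (hd : ∀ y ∈ Y, ‖q - y‖ ≤ ΔD ∧ ‖q' - y‖ ≤ ΔD) :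
    ptCost q Y ≤ ptCost q' Y + 2 * ΔD * ΔQT := by
  have h : ptCost q Y - 2 * ΔD * ΔQT ≤ ptCost q' Y := by
    apply le_csInf (hY.image _)
    rintro b ⟨y, hy, rfl⟩
    show ptCost q Y - 2 * ΔD * ΔQT ≤ ‖q' - y‖ ^ 2
    have h1 : ptCost q Y ≤ ‖q - y‖ ^ 2 := ptCost_le_of_mem q hy
    have h2 : ‖q - y‖ ≤ ‖q - q'‖ + ‖q' - y‖ := by
      have := norm_add_le (q - q') (q' - y); simpa using this
    obtain ⟨hd1, hd2⟩ := hd y hy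
    have hn : 0 ≤ ‖q - y‖ := norm_nonneg _
    have hn' : 0 ≤ ‖q' - y‖ := norm_nonneg _
    have ht : 0 ≤ ‖q - q'‖ := norm_nonneg _
    nlinarith [mul_le_mul_of_nonneg_right (by linarith : ‖q - y‖ - ‖q' - y‖ ≤ ‖q - q'‖)
        (by linarith : (0:ℝ) ≤ ‖q - y‖ + ‖q' - y‖),
      mul_le_mul_of_nonneg_left (by linarith : ‖q - y‖ + ‖q' - y‖ ≤ 2 * ΔD) ht,
      mul_le_mul_of_nonneg_right hqq' (by linarith : (0:ℝ) ≤ 2 * ΔD)]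
  linarith

theorem stmt11 {d d' k n : ℕ} (hk : 1 ≤ k) {ε1 ε2 : ℝ}
    (hε10 : 0 < ε1) (hε11 : ε1 < 1) (hε20 : 0 < ε2) (hε21 : ε2 < 1)
    (ΔD ΔQT : ℝ) (hΔD : 0 ≤ ΔD) (hΔQT : 0 ≤ ΔQT)
    (P : Finset (Pt d)) (hP : P.Nonempty) (hn : P.card = n)
    (X Xstar : Finset (Pt d)) (hX : X.card = k) (hXstar : Xstar.card = k)
    (π1 : Pt d → Pt d')
    (hJLX : (1 / (1 + ε1) ^ 2) * kmeansCost P (X : Set (Pt d)) ≤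
        projCost π1 P (π1 '' (X : Set (Pt d))) ∧
      projCost π1 P (π1 '' (X : Set (Pt d))) ≤
        (1 + ε1) ^ 2 * kmeansCost P (X : Set (Pt d)))
    (hJLXstar : (1 / (1 + ε1) ^ 2) * kmeansCost P (Xstar : Set (Pt d)) ≤
        projCost π1 P (π1 '' (Xstar : Set (Pt d))) ∧
      projCost π1 P (π1 '' (Xstar : Set (Pt d))) ≤
        (1 + ε1) ^ 2 * kmeansCost P (Xstar : Set (Pt d)))
    (S' : Finset (Pt d')) (hS' : S'.Nonempty) (w : Pt d' → ℝ) (Δ : ℝ)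
    (hw : ∀ q ∈ S', 0 ≤ w q) (hwsum : (∑ q ∈ S', w q) = (n : ℝ))
    (hcore : ∀ Y : Finset (Pt d'), Y.Nonempty → Y.card ≤ k →
      (1 - ε2) * projCost π1 P (Y : Set (Pt d')) ≤ coresetCost S' Δ w id (Y : Set (Pt d')) ∧
      coresetCost S' Δ w id (Y : Set (Pt d')) ≤ (1 + ε2) * projCost π1 P (Y : Set (Pt d')))
    (Γ : Pt d' → Pt d')
    (hΓ : ∀ q ∈ S', ‖q - Γ q‖ ≤ ΔQT)
    (hdiam : ∀ q ∈ S', ∀ y ∈ (π1 '' (X : Set (Pt d)) ∪ π1 '' (Xstar : Set (Pt d))),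
      ‖q - y‖ ≤ ΔD ∧ ‖Γ q - y‖ ≤ ΔD)
    (hopt : ∀ Y : Finset (Pt d'), Y.Nonempty → Y.card ≤ k →
      coresetCost S' Δ w Γ (π1 '' (X : Set (Pt d))) ≤
        coresetCost S' Δ w Γ (Y : Set (Pt d'))) :
    kmeansCost P (X : Set (Pt d)) ≤
      ((1 + ε1) ^ 4 * (1 + ε2) / (1 - ε2)) * kmeansCost P (Xstar : Set (Pt d)) +
        ((1 + ε1) ^ 2 / (1 - ε2)) * (4 * (n : ℝ) * ΔD * ΔQT) := by
  classical
  have hXne : X.Nonempty := by rw [← Finset.card_pos, hX]; omega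
  have hXsne : Xstar.Nonempty := by rw [← Finset.card_pos, hXstar]; omega
  set XF : Finset (Pt d') := X.image π1 with hXFdef
  set XsF : Finset (Pt d') := Xstar.image π1 with hXsFdef
  have hXFne : XF.Nonempty := hXne.image _
  have hXsFne : XsF.Nonempty := hXsne.image _
  have hXFcard : XF.card ≤ k := hX ▸ Finset.card_image_le
  have hXsFcard : XsF.card ≤ k := hXstar ▸ Finset.card_image_le
  have hcoeX : (XF : Set (Pt d')) = π1 '' (X : Set (Pt d)) := Finset.coe_image
  have hcoeXs : (XsF : Set (Pt d')) = π1 '' (Xstar : Set (Pt d)) := Finset.coe_image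
  have hneX : (π1 '' (X : Set (Pt d))).Nonempty := (Finset.coe_nonempty.2 hXne).image _
  have hneXs : (π1 '' (Xstar : Set (Pt d))).Nonempty := (Finset.coe_nonempty.2 hXsne).image _
  have hcX := hcore XF hXFne hXFcard
  have hcXs := hcore XsF hXsFne hXsFcard
  have hoptXs := hopt XsF hXsFne hXsFcard
  rw [hcoeX] at hcX
  rw [hcoeXs] at hcXs hoptXs
  -- quantization error bounds
  have hq1 : ∀ q ∈ S', ptCost q (π1 '' (X : Set (Pt d))) ≤
      ptCost (Γ q) (π1 '' (X : Set (Pt d))) + 2 * ΔD * ΔQT := fun q hq =>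
    ptCost_shift hneX hΔD (hΓ q hq) (fun y hy => hdiam q hq y (Or.inl hy))
  have hq2 : ∀ q ∈ S', ptCost (Γ q) (π1 '' (Xstar : Set (Pt d))) ≤
      ptCost q (π1 '' (Xstar : Set (Pt d))) + 2 * ΔD * ΔQT := fun q hq =>
    ptCost_shift hneXs hΔD (by rw [norm_sub_rev]; exact hΓ q hq)
      (fun y hy => ⟨(hdiam q hq y (Or.inr hy)).2, (hdiam q hq y (Or.inr hy)).1⟩)
  have hsum1 : coresetCost S' Δ w id (π1 '' (X : Set (Pt d))) ≤
      coresetCost S' Δ w Γ (π1 '' (X : Set (Pt d))) + 2 * ΔD * ΔQT * n := by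
    unfold coresetCost
    have h : ∑ q ∈ S', w q * ptCost (id q) (π1 '' (X : Set (Pt d))) ≤
        ∑ q ∈ S', (w q * ptCost (Γ q) (π1 '' (X : Set (Pt d))) + w q * (2 * ΔD * ΔQT)) :=
      Finset.sum_le_sum (fun q hq => by
        have h1 := mul_le_mul_of_nonneg_left (hq1 q hq) (hw q hq)
        simp only [id_eq]; nlinarith [h1])
    rw [Finset.sum_add_distrib, ← Finset.sum_mul, hwsum] at h
    linarith
  have hsum2 : coresetCost S' Δ w Γ (π1 '' (Xstar : Set (Pt d))) ≤
      coresetCost S' Δ w id (π1 '' (Xstar : Set (Pt d))) + 2 * ΔD * ΔQT * n := by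
    unfold coresetCost
    have h : ∑ q ∈ S', w q * ptCost (Γ q) (π1 '' (Xstar : Set (Pt d))) ≤
        ∑ q ∈ S', (w q * ptCost (id q) (π1 '' (Xstar : Set (Pt d))) + w q * (2 * ΔD * ΔQT)) :=
      Finset.sum_le_sum (fun q hq => by
        have h1 := mul_le_mul_of_nonneg_left (hq2 q hq) (hw q hq)
        simp only [id_eq]; nlinarith [h1])
    rw [Finset.sum_add_distrib, ← Finset.sum_mul, hwsum] at h
    linarith
  -- arithmetic
  have hc1 : (0:ℝ) < (1 + ε1) ^ 2 := by positivity
  have h1e2 : (0:ℝ) < 1 - ε2 := by linarith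
  have hA : kmeansCost P (X : Set (Pt d)) ≤
      (1 + ε1) ^ 2 * projCost π1 P (π1 '' (X : Set (Pt d))) := by
    have h := hJLX.1
    rw [one_div_mul_eq_div, div_le_iff₀ hc1] at h
    nlinarith [h]
  have hBs := hJLXstar.2
  have hchain : (1 - ε2) * projCost π1 P (π1 '' (X : Set (Pt d))) ≤
      (1 + ε2) * projCost π1 P (π1 '' (Xstar : Set (Pt d))) + 4 * (n : ℝ) * ΔD * ΔQT := by
    linarith [hcX.1, hsum1, hoptXs, hsum2, hcXs.2]
  have key : kmeansCost P (X : Set (Pt d)) * (1 - ε2) ≤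
      (1 + ε1) ^ 4 * (1 + ε2) * kmeansCost P (Xstar : Set (Pt d)) +
        (1 + ε1) ^ 2 * (4 * (n : ℝ) * ΔD * ΔQT) := by
    nlinarith [mul_le_mul_of_nonneg_left hA h1e2.le,
      mul_le_mul_of_nonneg_left hchain hc1.le,
      mul_le_mul_of_nonneg_left hBs (mul_nonneg hc1.le (by linarith : (0:ℝ) ≤ 1 + ε2))]
  have hrhs : ((1 + ε1) ^ 4 * (1 + ε2) / (1 - ε2)) * kmeansCost P (Xstar : Set (Pt d)) +
      ((1 + ε1) ^ 2 / (1 - ε2)) * (4 * (n : ℝ) * ΔD * ΔQT) =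
      ((1 + ε1) ^ 4 * (1 + ε2) * kmeansCost P (Xstar : Set (Pt d)) +
        (1 + ε1) ^ 2 * (4 * (n : ℝ) * ΔD * ΔQT)) / (1 - ε2) := by ring
  rw [hrhs, le_div_iff₀ h1e2]
  exact key
end

section
/- Let ε1, ε2 ∈ (0,1), k ≥ 1, Δ_D, Δ_QT ≥ 0, let P ⊂ ℝ^d be finite nonempty with |P| = n, and let X, X* ⊂ ℝ^d with |X| = |X*| = k. Suppose: (i) a triple (S,Δ,w), with S ⊂ ℝ^d finite nonempty, w : S → [0,∞) with Σ_{q∈S} w(q) = n, and Δ ∈ ℝ, satisfies (1−ε2)·cost(P,Y) ≤ cost((S,Δ,w),Y) ≤ (1+ε2)·cost(P,Y) for every Y ⊂ ℝ^d with |Y| = k; (ii) a map π1 : ℝ^d → ℝ^{d'} satisfies (1/(1+ε1)²)·cost((S,Δ,w),X) ≤ cost((π1(S),Δ,w),π1(X)) ≤ (1+ε1)²·cost((S,Δ,w),X), and likewise with X* in place of X; (iii) Γ : S → ℝ^{d'} satisfies ‖π1(q) − Γ(q)‖ ≤ Δ_QT for every q ∈ S, and ‖π1(q)−y‖ ≤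 Δ_D and ‖Γ(q)−y‖ ≤ Δ_D for every q ∈ S and every y ∈ π1(X) ∪ π1(X*); (iv) X' := π1(X) satisfies cost((Γ(S),Δ,w),X') ≤ cost((Γ(S),Δ,w),Y) for every finite nonempty Y ⊂ ℝ^{d'} with |Y| ≤ k. Then cost(P,X) ≤ ((1+ε1)^4·(1+ε2)/(1−ε2))·cost(P,X*) + ((1+ε1)²/(1−ε2))·4·n·Δ_D·Δ_QT. (Theorem 13, part 2: the quantization-added CR+DR algorithm, conditioned on the coreset and JL events.) -/
open scoped BigOperators

lemma ptCost_le {F : Type*} [NormedAddCommGroup F] (p : F) {Y : Set F} (hY : Y.Finite)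
    {y : F} (hy : y ∈ Y) : ptCost p Y ≤ ‖p - y‖ ^ 2 :=
  csInf_le (hY.image _).bddBelow ⟨y, hy, rfl⟩

lemma exists_ptCost_eq {F : Type*} [NormedAddCommGroup F] (p : F) {Y : Set F}
    (hY : Y.Finite) (hne : Y.Nonempty) : ∃ y ∈ Y, ptCost p Y = ‖p - y‖ ^ 2 := by
  have hmem : sInf ((fun y => ‖p - y‖ ^ 2) '' Y) ∈ (fun y => ‖p - y‖ ^ 2) '' Y :=
    (hne.image _).csInf_mem (hY.image _)
  obtain ⟨y, hy, hyeq⟩ := hmem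
  exact ⟨y, hy, hyeq.symm⟩

/-- Quantization comparison at a single point. -/
lemma ptCost_quant {F : Type*} [NormedAddCommGroup F] {a b : F} {Y : Set F}
    (hY : Y.Finite) (hne : Y.Nonempty) {ΔD ΔQT : ℝ}
    (hab : ‖a - b‖ ≤ ΔQT)
    (ha : ∀ y ∈ Y, ‖a - y‖ ≤ ΔD) (hb : ∀ y ∈ Y, ‖b - y‖ ≤ ΔD) :
    ptCost a Y ≤ ptCost b Y + 2 * ΔD * ΔQT := by
  obtain ⟨y, hy, heq⟩ := exists_ptCost_eq b hY hne
  have h1 : ptCost a Y ≤ ‖a - y‖ ^ 2 := ptCost_le a hY hy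
  have h2 : ‖a - y‖ ≤ ‖b - y‖ + ‖a - b‖ := by
    calc ‖a - y‖ = ‖(a - b) + (b - y)‖ := by rw [sub_add_sub_cancel]
    _ ≤ ‖a - b‖ + ‖b - y‖ := norm_add_le _ _
    _ = ‖b - y‖ + ‖a - b‖ := by ring
  have ha' := ha y hy
  have hb' := hb y hy
  have hna : (0:ℝ) ≤ ‖a - y‖ := norm_nonneg _
  have hnb : (0:ℝ) ≤ ‖b - y‖ := norm_nonneg _
  have hnab : (0:ℝ) ≤ ‖a - b‖ := norm_nonneg _
  nlinarith [mul_nonneg hna hnb, mul_nonneg (add_nonneg hna hnb) hnab]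

theorem stmt12 {d d' k n : ℕ} (hk : 1 ≤ k) {ε1 ε2 : ℝ}
    (hε10 : 0 < ε1) (hε11 : ε1 < 1) (hε20 : 0 < ε2) (hε21 : ε2 < 1)
    (ΔD ΔQT : ℝ) (hΔD : 0 ≤ ΔD) (hΔQT : 0 ≤ ΔQT)
    (P : Finset (Pt d)) (hP : P.Nonempty) (hn : P.card = n)
    (X Xstar : Finset (Pt d)) (hX : X.card = k) (hXstar : Xstar.card = k)
    (S : Finset (Pt d)) (hS : S.Nonempty) (w : Pt d → ℝ) (Δ : ℝ)
    (hw : ∀ q ∈ S, 0 ≤ w q) (hwsum : (∑ q ∈ S, w q) = (n : ℝ))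
    (hcore : ∀ Y : Finset (Pt d), Y.card = k →
      (1 - ε2) * kmeansCost P (Y : Set (Pt d)) ≤ coresetCost S Δ w id (Y : Set (Pt d)) ∧
      coresetCost S Δ w id (Y : Set (Pt d)) ≤ (1 + ε2) * kmeansCost P (Y : Set (Pt d)))
    (π1 : Pt d → Pt d')
    (hJLX : (1 / (1 + ε1) ^ 2) * coresetCost S Δ w id (X : Set (Pt d)) ≤
        coresetCost S Δ w π1 (π1 '' (X : Set (Pt d))) ∧
      coresetCost S Δ w π1 (π1 '' (X : Set (Pt d))) ≤
        (1 + ε1) ^ 2 * coresetCost S Δ w id (X : Set (Pt d)))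
    (hJLXstar : (1 / (1 + ε1) ^ 2) * coresetCost S Δ w id (Xstar : Set (Pt d)) ≤
        coresetCost S Δ w π1 (π1 '' (Xstar : Set (Pt d))) ∧
      coresetCost S Δ w π1 (π1 '' (Xstar : Set (Pt d))) ≤
        (1 + ε1) ^ 2 * coresetCost S Δ w id (Xstar : Set (Pt d)))
    (Γ : Pt d → Pt d')
    (hΓ : ∀ q ∈ S, ‖π1 q - Γ q‖ ≤ ΔQT)
    (hdiam : ∀ q ∈ S, ∀ y ∈ (π1 '' (X : Set (Pt d)) ∪ π1 '' (Xstar : Set (Pt d))),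
      ‖π1 q - y‖ ≤ ΔD ∧ ‖Γ q - y‖ ≤ ΔD)
    (hopt : ∀ Y : Finset (Pt d'), Y.Nonempty → Y.card ≤ k →
      coresetCost S Δ w Γ (π1 '' (X : Set (Pt d))) ≤
        coresetCost S Δ w Γ (Y : Set (Pt d'))) :
    kmeansCost P (X : Set (Pt d)) ≤
      ((1 + ε1) ^ 4 * (1 + ε2) / (1 - ε2)) * kmeansCost P (Xstar : Set (Pt d)) +
        ((1 + ε1) ^ 2 / (1 - ε2)) * (4 * (n : ℝ) * ΔD * ΔQT) := by
  classical
  have hXne : X.Nonempty := Finset.card_pos.mp (by omega)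
  have hXstarne : Xstar.Nonempty := Finset.card_pos.mp (by omega)
  have hYXfin : (π1 '' (X : Set (Pt d))).Finite := (X.finite_toSet).image π1
  have hYXne : (π1 '' (X : Set (Pt d))).Nonempty := hXne.to_set.image π1
  have hYSfin : (π1 '' (Xstar : Set (Pt d))).Finite := (Xstar.finite_toSet).image π1
  have hYSne : (π1 '' (Xstar : Set (Pt d))).Nonempty := hXstarne.to_set.image π1
  have hpos1 : (0:ℝ) < (1 + ε1) ^ 2 := by positivity
  have hpos2 : (0:ℝ) < 1 - ε2 := by linarith
  -- quantization bound over π1 '' X : core π1 ≤ core Γ + 2 n ΔD ΔQT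
  have hquantX : coresetCost S Δ w π1 (π1 '' (X : Set (Pt d))) ≤
      coresetCost S Δ w Γ (π1 '' (X : Set (Pt d))) + 2 * (n : ℝ) * ΔD * ΔQT := by
    unfold coresetCost
    have hsum : ∑ q ∈ S, w q * ptCost (π1 q) (π1 '' (X : Set (Pt d))) ≤
        ∑ q ∈ S, w q * (ptCost (Γ q) (π1 '' (X : Set (Pt d))) + 2 * ΔD * ΔQT) := by
      refine Finset.sum_le_sum fun q hq => ?_
      refine mul_le_mul_of_nonneg_left ?_ (hw q hq)
      refine ptCost_quant hYXfin hYXne (hΓ q hq) ?_ ?_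
      · exact fun y hy => (hdiam q hq y (Set.mem_union_left _ hy)).1
      · exact fun y hy => (hdiam q hq y (Set.mem_union_left _ hy)).2
    have heq : ∑ q ∈ S, w q * (ptCost (Γ q) (π1 '' (X : Set (Pt d))) + 2 * ΔD * ΔQT) =
        (∑ q ∈ S, w q * ptCost (Γ q) (π1 '' (X : Set (Pt d)))) + 2 * (n : ℝ) * ΔD * ΔQT := by
      rw [Finset.sum_congr rfl (fun q _ => by ring :
          ∀ q ∈ S, w q * (ptCost (Γ q) (π1 '' (X : Set (Pt d))) + 2 * ΔD * ΔQT) =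
            w q * ptCost (Γ q) (π1 '' (X : Set (Pt d))) + w q * (2 * ΔD * ΔQT)),
        Finset.sum_add_distrib, ← Finset.sum_mul, hwsum]
      ring
    linarith [hsum, heq.ge]
  -- quantization bound over π1 '' Xstar : core Γ ≤ core π1 + 2 n ΔD ΔQT
  have hquantXstar : coresetCost S Δ w Γ (π1 '' (Xstar : Set (Pt d))) ≤
      coresetCost S Δ w π1 (π1 '' (Xstar : Set (Pt d))) + 2 * (n : ℝ) * ΔD * ΔQT := by
    unfold coresetCost
    have hsum : ∑ q ∈ S, w q * ptCost (Γ q) (π1 '' (Xstar : Set (Pt d))) ≤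
        ∑ q ∈ S, w q * (ptCost (π1 q) (π1 '' (Xstar : Set (Pt d))) + 2 * ΔD * ΔQT) := by
      refine Finset.sum_le_sum fun q hq => ?_
      refine mul_le_mul_of_nonneg_left ?_ (hw q hq)
      have hab : ‖Γ q - π1 q‖ ≤ ΔQT := by rw [norm_sub_rev]; exact hΓ q hq
      refine ptCost_quant hYSfin hYSne hab ?_ ?_
      · exact fun y hy => (hdiam q hq y (Set.mem_union_right _ hy)).2
      · exact fun y hy => (hdiam q hq y (Set.mem_union_right _ hy)).1
    have heq : ∑ q ∈ S, w q * (ptCost (π1 q) (π1 '' (Xstar : Set (Pt d))) + 2 * ΔD * ΔQT) =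
        (∑ q ∈ S, w q * ptCost (π1 q) (π1 '' (Xstar : Set (Pt d)))) + 2 * (n : ℝ) * ΔD * ΔQT := by
      rw [Finset.sum_congr rfl (fun q _ => by ring :
          ∀ q ∈ S, w q * (ptCost (π1 q) (π1 '' (Xstar : Set (Pt d))) + 2 * ΔD * ΔQT) =
            w q * ptCost (π1 q) (π1 '' (Xstar : Set (Pt d))) + w q * (2 * ΔD * ΔQT)),
        Finset.sum_add_distrib, ← Finset.sum_mul, hwsum]
      ring
    linarith [hsum, heq.ge]
  -- optimality of π1 '' X among Γ-costs
  have hoptstar : coresetCost S Δ w Γ (π1 '' (X : Set (Pt d))) ≤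
      coresetCost S Δ w Γ (π1 '' (Xstar : Set (Pt d))) := by
    have := hopt (Xstar.image π1) (hXstarne.image π1)
      (le_trans (Finset.card_image_le) (le_of_eq hXstar))
    rwa [Finset.coe_image] at this
  -- JL bounds
  have hJL1 : coresetCost S Δ w id (X : Set (Pt d)) ≤
      (1 + ε1) ^ 2 * coresetCost S Δ w π1 (π1 '' (X : Set (Pt d))) := by
    have h := hJLX.1
    rw [div_mul_eq_mul_div, one_mul, div_le_iff₀ hpos1] at h
    linarith [mul_comm (coresetCost S Δ w π1 (π1 '' (X : Set (Pt d)))) ((1 + ε1) ^ 2)]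
  have hJL2 := hJLXstar.2
  -- coreset bounds
  have hc1 := (hcore X hX).1
  have hc2 := (hcore Xstar hXstar).2
  -- combine
  have hχ4 : (0:ℝ) ≤ (1 + ε1) ^ 4 := by positivity
  have hchain : (1 - ε2) * kmeansCost P (X : Set (Pt d)) ≤
      (1 + ε1) ^ 4 * (1 + ε2) * kmeansCost P (Xstar : Set (Pt d)) +
        (1 + ε1) ^ 2 * (4 * (n : ℝ) * ΔD * ΔQT) := by
    nlinarith [hc1, hJL1, hpos1.le, hχ4,
      mul_le_mul_of_nonneg_left hquantX hpos1.le,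
      mul_le_mul_of_nonneg_left hoptstar hpos1.le,
      mul_le_mul_of_nonneg_left hquantXstar hpos1.le,
      mul_le_mul_of_nonneg_left hJL2 hpos1.le,
      mul_le_mul_of_nonneg_left hc2 hχ4]
  rw [div_mul_eq_mul_div, div_mul_eq_mul_div, ← add_div, le_div_iff₀ hpos2]
  nlinarith [hchain]
end

section
/- Let ε1, ε1', ε2 ∈ (0,1), k ≥ 1, Δ_D, Δ_QT ≥ 0, let P ⊂ ℝ^d be finite nonempty with |P| = n, let X, X* ⊂ ℝ^d with |X| = |X*| = k, and let π1 : ℝ^d → ℝ^{d1} and π3 : ℝ^{d1} → ℝ^{d2} be maps. Suppose: (i) (1/(1+ε1)²)·cost(P,X) ≤ cost(π1(P),π1(X)) ≤ (1+ε1)²·cost(P,X), and likewise with X* in place of X; (ii) a triple (S,Δ,w), with S ⊂ ℝ^{d1} finite nonempty, w : S → [0,∞) with Σ_{q∈S} w(q) = n, and Δ ∈ ℝ, satisfies (1−ε2)·cost(π1(P),Y) ≤ cost((S,Δ,w),Y) ≤ (1+ε2)·cost(π1(P),Y) for every finite nonempty Y ⊂ ℝ^{d1} with |Y| ≤ k;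 (iii) (1/(1+ε1')²)·cost((S,Δ,w),π1(X)) ≤ cost((π3(S),Δ,w),π3(π1(X))) ≤ (1+ε1')²·cost((S,Δ,w),π1(X)), and likewise with X* in place of X; (iv) Γ : S → ℝ^{d2} satisfies ‖π3(q) − Γ(q)‖ ≤ Δ_QT for every q ∈ S, and ‖π3(q)−y‖ ≤ Δ_D and ‖Γ(q)−y‖ ≤ Δ_D for every q ∈ S and every y ∈ π3(π1(X)) ∪ π3(π1(X*)); (v) X' := π3(π1(X)) satisfies cost((Γ(S),Δ,w),X') ≤ cost((Γ(S),Δ,w),Y) for every finite nonempty Y ⊂ ℝ^{d2} with |Y| ≤ k. Then cost(P,X) ≤ ((1+ε1)^4·(1+ε2)·(1+ε1')^4/(1−ε2))·cost(P,X*) + ((1+ε1)²·(1+ε1')²/(1−ε2))·4·n·Δ_D·Δ_QT. (Theorem 13, part 3: the quantization-added JL+FSS+JL algorithm, conditioned on the JL and coreset events.) -/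
open scoped BigOperators

lemma ptCost_le_quant {F : Type*} [NormedAddCommGroup F] {Y : Set F}
    (hYf : Y.Finite) (hYne : Y.Nonempty) {a b : F} {ΔD ΔQT : ℝ}
    (hab : ‖a - b‖ ≤ ΔQT) (ha : ∀ y ∈ Y, ‖a - y‖ ≤ ΔD) (hb : ∀ y ∈ Y, ‖b - y‖ ≤ ΔD) :
    ptCost a Y ≤ ptCost b Y + 2 * ΔD * ΔQT := by
  obtain ⟨y0, hy0⟩ := hYne
  have hQT0 : 0 ≤ ΔQT := le_trans (norm_nonneg _) hab
  have hD0 : 0 ≤ ΔD := le_trans (norm_nonneg _) (ha y0 hy0)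
  have hmem : ptCost b Y ∈ ((fun y => ‖b - y‖ ^ 2) '' Y) :=
    Set.Nonempty.csInf_mem ⟨_, Set.mem_image_of_mem _ hy0⟩ (hYf.image _)
  obtain ⟨y, hyY, hyeq⟩ := hmem
  have h1 : ptCost a Y ≤ ‖a - y‖ ^ 2 := csInf_le ((hYf.image _).bddBelow) ⟨y, hyY, rfl⟩
  have h2 : ‖a - y‖ - ‖b - y‖ ≤ ‖a - b‖ := by
    have := norm_sub_norm_le (a - y) (b - y)
    have heq : (a - y) - (b - y) = a - b := by abel
    rw [heq] at this
    exact this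
  have h3 := ha y hyY
  have h4 := hb y hyY
  have h5 : 0 ≤ ‖a - y‖ := norm_nonneg _
  have h6 : 0 ≤ ‖b - y‖ := norm_nonneg _
  have hkey : ‖a - y‖ ^ 2 ≤ ‖b - y‖ ^ 2 + 2 * ΔD * ΔQT := by
    nlinarith [mul_nonneg (sub_nonneg.2 (h2.trans hab)) (add_nonneg h5 h6),
      mul_le_mul_of_nonneg_left (show ‖a - y‖ + ‖b - y‖ ≤ 2 * ΔD by linarith) hQT0]
  have h7 : ptCost b Y = ‖b - y‖ ^ 2 := hyeq.symm
  linarith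

lemma coresetCost_le_quant {d1 d2 : ℕ} (S : Finset (Pt d1)) (Δ : ℝ) (w : Pt d1 → ℝ)
    (hw : ∀ q ∈ S, 0 ≤ w q) (f g : Pt d1 → Pt d2) {Y : Set (Pt d2)}
    (hYf : Y.Finite) (hYne : Y.Nonempty) {ΔD ΔQT : ℝ}
    (hQT : ∀ q ∈ S, ‖f q - g q‖ ≤ ΔQT)
    (hf : ∀ q ∈ S, ∀ y ∈ Y, ‖f q - y‖ ≤ ΔD)
    (hg : ∀ q ∈ S, ∀ y ∈ Y, ‖g q - y‖ ≤ ΔD) :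
    coresetCost S Δ w f Y ≤ coresetCost S Δ w g Y + (∑ q ∈ S, w q) * (2 * ΔD * ΔQT) := by
  unfold coresetCost
  have hsum : ∑ q ∈ S, w q * ptCost (f q) Y ≤
      ∑ q ∈ S, (w q * ptCost (g q) Y + w q * (2 * ΔD * ΔQT)) := by
    apply Finset.sum_le_sum
    intro q hq
    have := ptCost_le_quant hYf hYne (hQT q hq) (hf q hq) (hg q hq)
    linarith [mul_le_mul_of_nonneg_left this (hw q hq)]
  rw [Finset.sum_add_distrib, ← Finset.sum_mul] at hsum
  linarith

theorem stmt13 {d d1 d2 k n : ℕ} (hk : 1 ≤ k) {ε1 ε1' ε2 : ℝ}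
    (hε10 : 0 < ε1) (hε11 : ε1 < 1) (hε1'0 : 0 < ε1') (hε1'1 : ε1' < 1)
    (hε20 : 0 < ε2) (hε21 : ε2 < 1)
    (ΔD ΔQT : ℝ) (hΔD : 0 ≤ ΔD) (hΔQT : 0 ≤ ΔQT)
    (P : Finset (Pt d)) (hP : P.Nonempty) (hn : P.card = n)
    (X Xstar : Finset (Pt d)) (hX : X.card = k) (hXstar : Xstar.card = k)
    (π1 : Pt d → Pt d1) (π3 : Pt d1 → Pt d2)
    (S : Finset (Pt d1)) (hS : S.Nonempty) (w : Pt d1 → ℝ) (Δ : ℝ)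
    (hw : ∀ q ∈ S, 0 ≤ w q) (hwsum : (∑ q ∈ S, w q) = (n : ℝ))
    (hJL1X : (1 / (1 + ε1) ^ 2) * kmeansCost P (X : Set (Pt d)) ≤
        projCost π1 P (π1 '' (X : Set (Pt d))) ∧
      projCost π1 P (π1 '' (X : Set (Pt d))) ≤
        (1 + ε1) ^ 2 * kmeansCost P (X : Set (Pt d)))
    (hJL1Xstar : (1 / (1 + ε1) ^ 2) * kmeansCost P (Xstar : Set (Pt d)) ≤
        projCost π1 P (π1 '' (Xstar : Set (Pt d))) ∧
      projCost π1 P (π1 '' (Xstar : Set (Pt d))) ≤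
        (1 + ε1) ^ 2 * kmeansCost P (Xstar : Set (Pt d)))
    (hcore : ∀ Y : Finset (Pt d1), Y.Nonempty → Y.card ≤ k →
      (1 - ε2) * projCost π1 P (Y : Set (Pt d1)) ≤ coresetCost S Δ w id (Y : Set (Pt d1)) ∧
      coresetCost S Δ w id (Y : Set (Pt d1)) ≤ (1 + ε2) * projCost π1 P (Y : Set (Pt d1)))
    (hJL2X : (1 / (1 + ε1') ^ 2) * coresetCost S Δ w id (π1 '' (X : Set (Pt d))) ≤
        coresetCost S Δ w π3 (π3 '' (π1 '' (X : Set (Pt d)))) ∧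
      coresetCost S Δ w π3 (π3 '' (π1 '' (X : Set (Pt d)))) ≤
        (1 + ε1') ^ 2 * coresetCost S Δ w id (π1 '' (X : Set (Pt d))))
    (hJL2Xstar : (1 / (1 + ε1') ^ 2) * coresetCost S Δ w id (π1 '' (Xstar : Set (Pt d))) ≤
        coresetCost S Δ w π3 (π3 '' (π1 '' (Xstar : Set (Pt d)))) ∧
      coresetCost S Δ w π3 (π3 '' (π1 '' (Xstar : Set (Pt d)))) ≤
        (1 + ε1') ^ 2 * coresetCost S Δ w id (π1 '' (Xstar : Set (Pt d))))
    (Γ : Pt d1 → Pt d2)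
    (hΓ : ∀ q ∈ S, ‖π3 q - Γ q‖ ≤ ΔQT)
    (hdiam : ∀ q ∈ S, ∀ y ∈ (π3 '' (π1 '' (X : Set (Pt d))) ∪ π3 '' (π1 '' (Xstar : Set (Pt d)))),
      ‖π3 q - y‖ ≤ ΔD ∧ ‖Γ q - y‖ ≤ ΔD)
    (hopt : ∀ Y : Finset (Pt d2), Y.Nonempty → Y.card ≤ k →
      coresetCost S Δ w Γ (π3 '' (π1 '' (X : Set (Pt d)))) ≤
        coresetCost S Δ w Γ (Y : Set (Pt d2))) :
    kmeansCost P (X : Set (Pt d)) ≤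
      ((1 + ε1) ^ 4 * (1 + ε2) * (1 + ε1') ^ 4 / (1 - ε2)) * kmeansCost P (Xstar : Set (Pt d)) +
        ((1 + ε1) ^ 2 * (1 + ε1') ^ 2 / (1 - ε2)) * (4 * (n : ℝ) * ΔD * ΔQT) := by
  classical
  -- abbreviations
  have hXne : X.Nonempty := Finset.card_pos.mp (by omega)
  have hXsne : Xstar.Nonempty := Finset.card_pos.mp (by omega)
  have hc1 : (0:ℝ) < (1 + ε1) ^ 2 := by positivity
  have hc2 : (0:ℝ) < (1 + ε1') ^ 2 := by positivity
  have he : (0:ℝ) < 1 - ε2 := by linarith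
  set C := kmeansCost P (X : Set (Pt d)) with hC
  set Cs := kmeansCost P (Xstar : Set (Pt d)) with hCs
  set A := projCost π1 P (π1 '' (X : Set (Pt d))) with hA
  set As := projCost π1 P (π1 '' (Xstar : Set (Pt d))) with hAs
  set B := coresetCost S Δ w id (π1 '' (X : Set (Pt d))) with hB
  set Bs := coresetCost S Δ w id (π1 '' (Xstar : Set (Pt d))) with hBs
  set D := coresetCost S Δ w π3 (π3 '' (π1 '' (X : Set (Pt d)))) with hD
  set Ds := coresetCost S Δ w π3 (π3 '' (π1 '' (Xstar : Set (Pt d)))) with hDs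
  set G := coresetCost S Δ w Γ (π3 '' (π1 '' (X : Set (Pt d)))) with hG
  set Gs := coresetCost S Δ w Γ (π3 '' (π1 '' (Xstar : Set (Pt d)))) with hGs
  -- i1 : C ≤ c1 * A
  have i1 : C ≤ (1 + ε1) ^ 2 * A := by
    have h := hJL1X.1
    rw [div_mul_eq_mul_div, div_le_iff₀ hc1] at h
    linarith [h]
  -- i2 : (1-ε2) * A ≤ B : apply hcore to X.image π1
  have hYX : ((X.image π1 : Finset (Pt d1)) : Set (Pt d1)) = π1 '' (X : Set (Pt d)) :=
    Finset.coe_image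
  have i2 : (1 - ε2) * A ≤ B := by
    have h := (hcore (X.image π1) (hXne.image π1)
      (by rw [← hX]; exact Finset.card_image_le)).1
    rw [hYX] at h
    exact h
  -- i3 : B ≤ c2 * D
  have i3 : B ≤ (1 + ε1') ^ 2 * D := by
    have h := hJL2X.1
    rw [div_mul_eq_mul_div, div_le_iff₀ hc2] at h
    linarith [h]
  -- quantization data
  have hYXf : (π3 '' (π1 '' (X : Set (Pt d)))).Finite :=
    ((X.finite_toSet.image π1).image π3)
  have hYXne : (π3 '' (π1 '' (X : Set (Pt d)))).Nonempty := by
    exact ((hXne.to_set.image π1).image π3)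
  have hYXsf : (π3 '' (π1 '' (Xstar : Set (Pt d)))).Finite :=
    ((Xstar.finite_toSet.image π1).image π3)
  have hYXsne : (π3 '' (π1 '' (Xstar : Set (Pt d)))).Nonempty := by
    exact ((hXsne.to_set.image π1).image π3)
  -- i4 : D ≤ G + n * (2 ΔD ΔQT)
  have i4 : D ≤ G + (n : ℝ) * (2 * ΔD * ΔQT) := by
    have h := coresetCost_le_quant S Δ w hw π3 Γ hYXf hYXne hΓ
      (fun q hq y hy => (hdiam q hq y (Set.mem_union_left _ hy)).1)
      (fun q hq y hy => (hdiam q hq y (Set.mem_union_left _ hy)).2)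
    rw [hwsum] at h
    exact h
  -- i5 : G ≤ Gs
  have i5 : G ≤ Gs := by
    have hYs : (((Xstar.image π1).image π3 : Finset (Pt d2)) : Set (Pt d2)) =
        π3 '' (π1 '' (Xstar : Set (Pt d))) := by
      rw [Finset.coe_image, Finset.coe_image]
    have h := hopt ((Xstar.image π1).image π3) ((hXsne.image π1).image π3)
      (le_trans Finset.card_image_le (by rw [← hXstar]; exact Finset.card_image_le))
    rw [hYs] at h
    exact h
  -- i6 : Gs ≤ Ds + n * (2 ΔD ΔQT)
  have i6 : Gs ≤ Ds + (n : ℝ) * (2 * ΔD * ΔQT) := by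
    have h := coresetCost_le_quant S Δ w hw Γ π3 hYXsf hYXsne
      (fun q hq => by rw [norm_sub_rev]; exact hΓ q hq)
      (fun q hq y hy => (hdiam q hq y (Set.mem_union_right _ hy)).2)
      (fun q hq y hy => (hdiam q hq y (Set.mem_union_right _ hy)).1)
    rw [hwsum] at h
    exact h
  -- i7 : Ds ≤ c2 * Bs
  have i7 : Ds ≤ (1 + ε1') ^ 2 * Bs := hJL2Xstar.2
  -- i8 : Bs ≤ (1+ε2) * As
  have i8 : Bs ≤ (1 + ε2) * As := by
    have h := (hcore (Xstar.image π1) (hXsne.image π1)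
      (by rw [← hXstar]; exact Finset.card_image_le)).2
    rw [show ((Xstar.image π1 : Finset (Pt d1)) : Set (Pt d1)) =
      π1 '' (Xstar : Set (Pt d)) from Finset.coe_image] at h
    exact h
  -- i9 : As ≤ c1 * Cs
  have i9 : As ≤ (1 + ε1) ^ 2 * Cs := hJL1Xstar.2
  -- combine
  have hD' : D ≤ (1 + ε1') ^ 2 * ((1 + ε2) * ((1 + ε1) ^ 2 * Cs)) +
      (4 * (n : ℝ) * ΔD * ΔQT) := by
    have h7 : (1 + ε1') ^ 2 * Bs ≤ (1 + ε1') ^ 2 * ((1 + ε2) * As) :=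
      mul_le_mul_of_nonneg_left i8 hc2.le
    have h8 : (1 + ε1') ^ 2 * ((1 + ε2) * As) ≤
        (1 + ε1') ^ 2 * ((1 + ε2) * ((1 + ε1) ^ 2 * Cs)) := by
      apply mul_le_mul_of_nonneg_left _ hc2.le
      exact mul_le_mul_of_nonneg_left i9 (by linarith)
    linarith [i4, i5, i6, i7, h7, h8]
  have key : (1 - ε2) * C ≤
      (1 + ε1) ^ 4 * (1 + ε2) * (1 + ε1') ^ 4 * Cs +
      (1 + ε1) ^ 2 * (1 + ε1') ^ 2 * (4 * (n : ℝ) * ΔD * ΔQT) := by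
    have h1 : (1 - ε2) * C ≤ (1 + ε1) ^ 2 * B := by
      linarith [mul_le_mul_of_nonneg_left i1 he.le,
        mul_le_mul_of_nonneg_left i2 hc1.le]
    have h2 : (1 + ε1) ^ 2 * B ≤ (1 + ε1) ^ 2 * ((1 + ε1') ^ 2 * D) :=
      mul_le_mul_of_nonneg_left i3 hc1.le
    have h3 : (1 + ε1) ^ 2 * ((1 + ε1') ^ 2 * D) ≤
        (1 + ε1) ^ 2 * ((1 + ε1') ^ 2 *
          ((1 + ε1') ^ 2 * ((1 + ε2) * ((1 + ε1) ^ 2 * Cs)) +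
            (4 * (n : ℝ) * ΔD * ΔQT))) := by
      apply mul_le_mul_of_nonneg_left _ hc1.le
      exact mul_le_mul_of_nonneg_left hD' hc2.le
    linarith [h1.trans (h2.trans h3)]
  
  rw [div_mul_eq_mul_div, div_mul_eq_mul_div, ← add_div, le_div_iff₀ he]
  linarith [key]
end
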